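/- Let X and Y be self-adjoint operators on a Hilbert space with X ≥ 0, X + Y ≥ 0 and ‖Y‖ ≤ M for some M > 0. Then (X + Y + 2M)^{-2} ≤ 4 (X + M)^{-2} ≤ 4 (X² + M²)^{-1} as operator inequalities. -/

import Mathlib

set_option maxHeartbeats 1000000


open ContinuousLinearMap

section Helpers

variable {H : Type*} [NormedAddCommGroup H] [InnerProductSpace ℂ H] [CompleteSpace H]

private lemma real_smul_nonneg_clm {a : H →L[ℂ] H} {r : ℝ} (hr : 0 ≤ r)
    (ha : (0 : H →L[ℂ] H) ≤ a) : (0 : H →L[ℂ] H) ≤ ((r : ℝ) : ℂ) • a := by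
  have h := star_left_conjugate_nonneg ha (((Real.sqrt r : ℝ) : ℂ) • (1 : H →L[ℂ] H))
  rwa [star_smul, star_one, Complex.star_def, Complex.conj_ofReal, smul_mul_assoc, one_mul,
    mul_smul_comm, mul_one, smul_smul, ← Complex.ofReal_mul, Real.mul_self_sqrt hr] at h

private lemma real_smul_le_clm {a b : H →L[ℂ] H} {r : ℝ} (hr : 0 ≤ r) (h : a ≤ b) :
    ((r : ℝ) : ℂ) • a ≤ ((r : ℝ) : ℂ) • b := by
  have h2 := real_smul_nonneg_clm hr (sub_nonneg.2 h)
  rw [smul_sub] at h2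
  exact sub_nonneg.1 h2

end Helpers

/-- If `X, Y` are self-adjoint, `X ≥ 0`, `X + Y ≥ 0` and `‖Y‖ ≤ M`,
then `(X + Y + 2M)⁻² ≤ 4 (X + M)⁻² ≤ 4 (X² + M²)⁻¹`, where `R1, R2, R3` denote the
respective (two-sided) inverses. -/
theorem stmt1 {H : Type*} [NormedAddCommGroup H] [InnerProductSpace ℂ H] [CompleteSpace H]
    (X Y R1 R2 R3 : H →L[ℂ] H) (M : ℝ) (hM : 0 < M)
    (hXsa : IsSelfAdjoint X) (hYsa : IsSelfAdjoint Y)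
    (hX : X.IsPositive) (hXY : (X + Y).IsPositive) (hY : ‖Y‖ ≤ M)
    (hR1 : (X + Y + ((2 * M : ℝ) : ℂ) • 1) ∘L R1 = 1)
    (hR1' : R1 ∘L (X + Y + ((2 * M : ℝ) : ℂ) • 1) = 1)
    (hR2 : (X + ((M : ℝ) : ℂ) • 1) ∘L R2 = 1)
    (hR2' : R2 ∘L (X + ((M : ℝ) : ℂ) • 1) = 1)
    (hR3 : (X ∘L X + ((M ^ 2 : ℝ) : ℂ) • 1) ∘L R3 = 1)
    (hR3' : R3 ∘L (X ∘L X + ((M ^ 2 : ℝ) : ℂ) • 1) = 1) :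
    (((4 : ℂ) • (R2 ∘L R2)) - R1 ∘L R1).IsPositive ∧
      (((4 : ℂ) • R3) - (4 : ℂ) • (R2 ∘L R2)).IsPositive := by
  simp only [← ContinuousLinearMap.mul_def] at hR1 hR1' hR2 hR2' hR3 hR3' ⊢
  set A : H →L[ℂ] H := X + Y + ((2 * M : ℝ) : ℂ) • 1 with hA
  set B : H →L[ℂ] H := X + ((M : ℝ) : ℂ) • 1 with hB
  set C : H →L[ℂ] H := X * X + ((M ^ 2 : ℝ) : ℂ) • 1 with hC
  -- self-adjointness
  have hsm_sa : ∀ r : ℝ, IsSelfAdjoint (((r : ℝ) : ℂ) • (1 : H →L[ℂ] H)) := fun r => by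
    simp [IsSelfAdjoint, star_smul, Complex.star_def, Complex.conj_ofReal]
  have hAsa : IsSelfAdjoint A := (hXsa.add hYsa).add (hsm_sa _)
  have hBsa : IsSelfAdjoint B := hXsa.add (hsm_sa _)
  -- nonnegativity (Loewner order)
  have h1nn : (0 : H →L[ℂ] H) ≤ 1 := (nonneg_iff_isPositive _).2 isPositive_one
  have hX0 : (0 : H →L[ℂ] H) ≤ X := (nonneg_iff_isPositive _).2 hX
  have hXY0 : (0 : H →L[ℂ] H) ≤ X + Y := (nonneg_iff_isPositive _).2 hXY
  have hB0 : (0 : H →L[ℂ] H) ≤ B :=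
    add_nonneg hX0 (real_smul_nonneg_clm hM.le h1nn)
  have hXX0 : (0 : H →L[ℂ] H) ≤ X * X := by
    have h := star_mul_self_nonneg X
    rwa [hXsa.star_eq] at h
  have hC0 : (0 : H →L[ℂ] H) ≤ C :=
    add_nonneg hXX0 (real_smul_nonneg_clm (sq_nonneg M) h1nn)
  have hBB0 : (0 : H →L[ℂ] H) ≤ B * B := by
    have h := star_mul_self_nonneg B
    rwa [hBsa.star_eq] at h
  -- C ≤ B * B
  have hBBeq : B * B = C + ((2 * M : ℝ) : ℂ) • X := by
    rw [hB, hC]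
    simp only [mul_add, add_mul, mul_smul_comm, smul_mul_assoc, one_mul, mul_one, smul_smul]
    push_cast
    module
  have hCle : C ≤ B * B := by
    rw [hBBeq]
    exact le_add_of_nonneg_right (real_smul_nonneg_clm (by positivity) hX0)
  -- first inverse comparison : R2 * R2 ≤ R3
  have h2 : R2 * R2 ≤ R3 := by
    have h := CStarAlgebra.inv_le_inv (a := Units.mk C R3 hR3 hR3')
      (b := Units.mk B R2 hR2 hR2' * Units.mk B R2 hR2 hR2') hC0 hCle
    simpa [mul_inv_rev] using h
  -- the analytic inequality : B * B ≤ (2 A) * (2 A)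
  have key : B * B ≤ ((2 : ℂ) • A) * ((2 : ℂ) • A) := by
    rw [ContinuousLinearMap.le_def]
    have hrw : ((2 : ℂ) • A) * ((2 : ℂ) • A) - B * B = (4 : ℂ) • (A * A) - B * B := by
      rw [smul_mul_assoc, mul_smul_comm, smul_smul]
      norm_num
    rw [hrw]
    have hAAsa : IsSelfAdjoint (A * A) := by have := hAsa.pow 2; rwa [sq] at this
    have hBBsa : IsSelfAdjoint (B * B) := by have := hBsa.pow 2; rwa [sq] at this
    have h4sa : IsSelfAdjoint ((4 : ℂ) • (A * A)) := by
      rw [IsSelfAdjoint, star_smul, hAAsa.star_eq]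
      norm_num
    refine ⟨ContinuousLinearMap.isSelfAdjoint_iff_isSymmetric.mp (h4sa.sub hBBsa), fun x => ?_⟩
    have hAadj : ContinuousLinearMap.adjoint A = A := ContinuousLinearMap.isSelfAdjoint_iff'.mp hAsa
    have hBadj : ContinuousLinearMap.adjoint B = B := ContinuousLinearMap.isSelfAdjoint_iff'.mp hBsa
    have h1 : (inner ℂ ((A * A) x) x : ℂ) = ((‖A x‖ ^ 2 : ℝ) : ℂ) := by
      rw [ContinuousLinearMap.mul_apply]
      nth_rewrite 1 [← hAadj]
      rw [ContinuousLinearMap.adjoint_inner_left, inner_self_eq_norm_sq_to_K]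
      norm_cast
    have h1' : (inner ℂ ((B * B) x) x : ℂ) = ((‖B x‖ ^ 2 : ℝ) : ℂ) := by
      rw [ContinuousLinearMap.mul_apply]
      nth_rewrite 1 [← hBadj]
      rw [ContinuousLinearMap.adjoint_inner_left, inner_self_eq_norm_sq_to_K]
      norm_cast
    have expand : ((4 : ℂ) • (A * A) - B * B).reApplyInnerSelf x
        = 4 * ‖A x‖ ^ 2 - ‖B x‖ ^ 2 := by
      rw [ContinuousLinearMap.reApplyInnerSelf_apply, ContinuousLinearMap.sub_apply,
        ContinuousLinearMap.smul_apply, inner_sub_left, inner_smul_left, h1, h1']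
      simp only [map_ofNat]
      simp [← Complex.ofReal_pow, Complex.ofReal_re]
    rw [expand]
    -- analytic estimates
    have hYx : ‖Y x‖ ≤ M * ‖x‖ :=
      (Y.le_opNorm x).trans (mul_le_mul_of_nonneg_right hY (norm_nonneg x))
    have hMx : ‖((M : ℝ) : ℂ) • x‖ = M * ‖x‖ := by
      rw [norm_smul, Complex.norm_real, Real.norm_eq_abs, abs_of_pos hM]
    have hBx : B x = A x - Y x - ((M : ℝ) : ℂ) • x := by
      have h2M : ((2 * M : ℝ) : ℂ) = ((M : ℝ) : ℂ) + ((M : ℝ) : ℂ) := by push_cast; ring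
      simp only [hA, hB, ContinuousLinearMap.add_apply, ContinuousLinearMap.smul_apply,
        ContinuousLinearMap.one_apply, h2M, add_smul]
      abel
    have hnormB : ‖B x‖ ≤ ‖A x‖ + 2 * M * ‖x‖ := by
      rw [hBx]
      calc ‖A x - Y x - ((M : ℝ) : ℂ) • x‖ ≤ ‖A x - Y x‖ + ‖((M : ℝ) : ℂ) • x‖ :=
            norm_sub_le _ _
        _ ≤ ‖A x‖ + ‖Y x‖ + ‖((M : ℝ) : ℂ) • x‖ := by
            have := norm_sub_le (A x) (Y x); linarith
        _ ≤ ‖A x‖ + 2 * M * ‖x‖ := by rw [hMx]; linarith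
    have hax : A x = (X + Y) x + ((2 * M : ℝ) : ℂ) • x := by
      simp only [hA, ContinuousLinearMap.add_apply, ContinuousLinearMap.smul_apply,
        ContinuousLinearMap.one_apply]
    have hlow : 2 * M * ‖x‖ ^ 2 ≤ RCLike.re (inner ℂ (A x) x : ℂ) := by
      rw [hax, inner_add_left, map_add]
      have e1 : RCLike.re (inner ℂ (((2 * M : ℝ) : ℂ) • x) x : ℂ) = 2 * M * ‖x‖ ^ 2 := by
        rw [inner_smul_left, inner_self_eq_norm_sq_to_K]
        simp only [Complex.conj_ofReal]
        push_cast
        simp [← Complex.ofReal_pow, Complex.ofReal_re]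
      rw [e1]
      have := (RCLike.nonneg_iff.mp (hXY.inner_nonneg_left x)).1
      linarith
    have hup : RCLike.re (inner ℂ (A x) x : ℂ) ≤ ‖A x‖ * ‖x‖ := re_inner_le_norm _ _
    rcases eq_or_ne x 0 with rfl | hx
    · simp
    · have hxpos : 0 < ‖x‖ := norm_pos_iff.2 hx
      have h2M : 2 * M * ‖x‖ ≤ ‖A x‖ := by
        have h := hlow.trans hup
        have h' : (2 * M * ‖x‖) * ‖x‖ ≤ ‖A x‖ * ‖x‖ := by nlinarith
        exact le_of_mul_le_mul_right h' hxpos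
      nlinarith [norm_nonneg (B x), norm_nonneg (A x)]
  -- second inverse comparison
  have hval : ((2 : ℂ) • A) * ((2⁻¹ : ℂ) • R1) = 1 := by
    rw [smul_mul_assoc, mul_smul_comm, smul_smul, hR1]
    norm_num
  have hval' : ((2⁻¹ : ℂ) • R1) * ((2 : ℂ) • A) = 1 := by
    rw [smul_mul_assoc, mul_smul_comm, smul_smul, hR1']
    norm_num
  have h1 : ((2⁻¹ : ℂ) • R1) * ((2⁻¹ : ℂ) • R1) ≤ R2 * R2 := by
    have h := CStarAlgebra.inv_le_inv (a := Units.mk B R2 hR2 hR2' * Units.mk B R2 hR2 hR2')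
      (b := Units.mk ((2 : ℂ) • A) ((2⁻¹ : ℂ) • R1) hval hval' *
        Units.mk ((2 : ℂ) • A) ((2⁻¹ : ℂ) • R1) hval hval') hBB0 key
    simpa [mul_inv_rev] using h
  have h1' : ((4 : ℝ) : ℂ)⁻¹ • (R1 * R1) ≤ R2 * R2 := by
    rw [smul_mul_assoc, mul_smul_comm, smul_smul] at h1
    convert h1 using 2
    norm_num
  have hfin : R1 * R1 ≤ (4 : ℂ) • (R2 * R2) := by
    have h4 := real_smul_le_clm (by norm_num : (0 : ℝ) ≤ 4) h1'
    rw [smul_smul] at h4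
    norm_num at h4
    exact h4
  constructor
  · rw [← nonneg_iff_isPositive]
    exact sub_nonneg.2 hfin
  · rw [← nonneg_iff_isPositive]
    refine sub_nonneg.2 ?_
    have h4 := real_smul_le_clm (by norm_num : (0 : ℝ) ≤ 4) h2
    convert h4 using 2 <;> norm_num
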